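/- For abstract feature structures A′ and B′, and for every A ∈ Conc(A′) and B ∈ Conc(B′): A ⊑ B if and only if A′ ≼ B′. -/

import Mathlib

def deltaStar {F N : Type*} (d : N → F → Option N) : N → List F → Option N
  | q, [] => some q
  | q, f :: rest => (d q f).bind fun q' => deltaStar d q' rest

/-- A typed feature structure: a finite rooted graph with feature-labelled arcs,
all of whose nodes are reachable from the root. -/
structure TFS (F N : Type*) where
  Q : Finset N
  root : N
  root_mem : root ∈ Q
  delta : N → F → Option N
  delta_dom : ∀ q f q', delta q f = some q' → q ∈ Q ∧ q' ∈ Q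
  reach : ∀ q ∈ Q, ∃ π : List F, deltaStar delta root π = some q

/-- The value `δ(q̄, π)` of a path from the root. -/
def TFS.val {F N : Type*} (A : TFS F N) (π : List F) : Option N :=
  deltaStar A.delta A.root π

/-- `Π(A)`, the set of paths of `A`. -/
def TFS.paths {F N : Type*} (A : TFS F N) : Set (List F) :=
  {π | (A.val π).isSome}

/-- A TFS is cyclic if some node returns to itself via a nonempty path. -/
def TFS.Cyclic {F N : Type*} (A : TFS F N) : Prop :=
  ∃ q ∈ A.Q, ∃ α : List F, α ≠ [] ∧ deltaStar A.delta q α = some q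

/-- Subsumption of TFSs via a subsumption morphism. -/
def Subsumes {F N T : Type*} [PartialOrder T] (θ : N → T) (A B : TFS F N) : Prop :=
  ∃ h : N → N,
    (∀ q ∈ A.Q, h q ∈ B.Q) ∧
    h A.root = B.root ∧
    (∀ q ∈ A.Q, θ q ≤ θ (h q)) ∧
    (∀ q f q', A.delta q f = some q' → B.delta (h q) f = some (h q'))

/-- Bounded completeness: every up-bounded subset has a least upper bound. -/
def BddComplete (T : Type*) [PartialOrder T] : Prop :=
  ∀ S : Set T, (∃ u, ∀ t ∈ S, t ≤ u) → ∃ l, IsLUB S l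

/-- A pre-abstract feature structure: a partial assignment of types to paths
(whose domain is the path set `Π`) together with a reentrancy relation. -/
structure PreAFS (F T : Type*) where
  theta : List F → Option T
  rel : List F → List F → Prop

/-- The path set `Π` of a pre-AFS. -/
def PreAFS.dom {F T : Type*} (A : PreAFS F T) : Set (List F) :=
  {π | (A.theta π).isSome}

/-- The pre-AFS conditions: `Π` is nonempty and `≈ ⊆ Π × Π`. -/
def IsPreAFS {F T : Type*} (A : PreAFS F T) : Prop :=
  A.dom.Nonempty ∧ ∀ π₁ π₂, A.rel π₁ π₂ → π₁ ∈ A.dom ∧ π₂ ∈ A.dom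

/-- `Π` is prefix-closed. -/
def PrefixClosed {F T : Type*} (A : PreAFS F T) : Prop :=
  ∀ π α : List F, π ++ α ∈ A.dom → π ∈ A.dom

/-- Fusion-closedness. -/
def FusionClosed {F T : Type*} (A : PreAFS F T) : Prop :=
  ∀ π π' α α' : List F, π ++ α ∈ A.dom → π' ++ α' ∈ A.dom → A.rel π π' →
    π ++ α' ∈ A.dom ∧ π' ++ α ∈ A.dom ∧
    A.rel (π ++ α') (π' ++ α') ∧ A.rel (π' ++ α) (π ++ α)

/-- `≈` is an equivalence relation on `Π`. -/
def EquivOnDom {F T : Type*} (A : PreAFS F T) : Prop :=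
  (∀ π ∈ A.dom, A.rel π π) ∧
  (∀ π₁ π₂, A.rel π₁ π₂ → A.rel π₂ π₁) ∧
  (∀ π₁ π₂ π₃, A.rel π₁ π₂ → A.rel π₂ π₃ → A.rel π₁ π₃)

/-- `≈` has finitely many equivalence classes. -/
def FiniteIndex {F T : Type*} (A : PreAFS F T) : Prop :=
  {C : Set (List F) | ∃ π ∈ A.dom, C = {π' | A.rel π π'}}.Finite

/-- `Θ` respects the equivalence `≈`. -/
def RespectsRel {F T : Type*} (A : PreAFS F T) : Prop :=
  ∀ π₁ π₂, A.rel π₁ π₂ → A.theta π₁ = A.theta π₂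

/-- Abstract feature structures. -/
def IsAFS {F T : Type*} (A : PreAFS F T) : Prop :=
  IsPreAFS A ∧ PrefixClosed A ∧ FusionClosed A ∧
    EquivOnDom A ∧ FiniteIndex A ∧ RespectsRel A

/-- Bounded completeness: every up-bounded subset has a least upper bound. -/
def BddCompleteTypes (T : Type*) [PartialOrder T] : Prop :=
  ∀ S : Set T, (∃ u, ∀ t ∈ S, t ≤ u) → ∃ l, IsLUB S l

/-- The order `≼` on (pre-)AFSs. -/
def AbsLE {F T : Type*} [PartialOrder T] (A B : PreAFS F T) : Prop :=
  A.dom ⊆ B.dom ∧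
  (∀ π₁ π₂, A.rel π₁ π₂ → B.rel π₁ π₂) ∧
  ∀ π ∈ A.dom, ∀ t₁ t₂ : T, A.theta π = some t₁ → B.theta π = some t₂ → t₁ ≤ t₂

/-- The concretization `Conc(A)` of a pre-AFS `A`: all TFSs obtained by injecting
the `≈`-equivalence classes (represented via a choice function `g` constant exactly
on classes) into the nodes, with root the class of `ε`, types given by `Θ`, and
transitions `δ(q_[π], f) = q_[πf]` whenever `πf ∈ Π`. -/
def Conc {F N T : Type*} (θ : N → T) (A : PreAFS F T) : Set (TFS F N) :=
  {B | ∃ g : List F → N,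
    B.root = g [] ∧
    (B.Q : Set N) = g '' A.dom ∧
    (∀ π₁ ∈ A.dom, ∀ π₂ ∈ A.dom, (g π₁ = g π₂ ↔ A.rel π₁ π₂)) ∧
    (∀ π ∈ A.dom, A.theta π = some (θ (g π))) ∧
    ∀ π ∈ A.dom, ∀ f : F,
      (π ++ [f] ∈ A.dom → B.delta (g π) f = some (g (π ++ [f]))) ∧
      (π ++ [f] ∉ A.dom → B.delta (g π) f = none)}


theorem deltaStar_append' {F N : Type*} (d : N → F → Option N) (q : N) (α β : List F) :
    deltaStar d q (α ++ β) = (deltaStar d q α).bind fun q' => deltaStar d q' β := by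
  induction α generalizing q with
  | nil => simp [deltaStar]
  | cons f rest ih =>
    simp only [List.cons_append, deltaStar]
    cases d q f <;> simp [ih]

/-- for AFSs `A′`, `B′` and any `A ∈ Conc(A′)`, `B ∈ Conc(B′)`:
`A ⊑ B` iff `A′ ≼ B′`. -/
theorem conc_subsumes_iff_absLE
    {F N T : Type*} [Finite F] [Finite T] [PartialOrder T] [Infinite N]
    (hbc : BddComplete T) (θ : N → T)
    (hrich : ∀ t : T, {q : N | θ q = t}.Infinite)
    (A' B' : PreAFS F T) (hA' : IsAFS A') (hB' : IsAFS B')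
    (A B : TFS F N) (hA : A ∈ Conc θ A') (hB : B ∈ Conc θ B') :
    Subsumes θ A B ↔ AbsLE A' B' := by
  
  obtain ⟨g, hgroot, hgQ, hginj, hgtheta, hgdelta⟩ := hA
  obtain ⟨g', hg'root, hg'Q, hg'inj, hg'theta, hg'delta⟩ := hB
  obtain ⟨⟨hAne, hArel⟩, hApref, -, -, -, -⟩ := hA'
  obtain ⟨⟨hBne, -⟩, hBpref, -, -, -, -⟩ := hB'
  have hAnil : [] ∈ A'.dom := by
    obtain ⟨π, hπ⟩ := hAne; exact hApref [] π (by simpa using hπ)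
  have valA : ∀ π : List F, ∀ q : N,
      deltaStar A.delta A.root π = some q ↔ π ∈ A'.dom ∧ q = g π := by
    intro π
    induction π using List.reverseRecOn with
    | nil =>
      intro q
      simp only [deltaStar, hgroot, Option.some_inj]
      constructor
      · rintro rfl; exact ⟨hAnil, rfl⟩
      · rintro ⟨-, rfl⟩; rfl
    | append_singleton π' f ih =>
      intro q
      rw [deltaStar_append']
      constructor
      · intro hq
        obtain ⟨q₀, hq₀, hstep⟩ := Option.bind_eq_some_iff.mp hq
        obtain ⟨hπ', rfl⟩ := (ih q₀).mp hq₀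
        simp only [deltaStar] at hstep
        by_cases hmem : π' ++ [f] ∈ A'.dom
        · rw [(hgdelta π' hπ' f).1 hmem] at hstep
          simp only [Option.bind_some, Option.some_inj] at hstep
          exact ⟨hmem, hstep.symm⟩
        · rw [(hgdelta π' hπ' f).2 hmem] at hstep
          simp at hstep
      · rintro ⟨hmem, rfl⟩
        have hπ' : π' ∈ A'.dom := hApref π' [f] hmem
        rw [(ih (g π')).mpr ⟨hπ', rfl⟩]
        simp [deltaStar, (hgdelta π' hπ' f).1 hmem]
  have valB : ∀ π : List F, ∀ q : N,
      deltaStar B.delta B.root π = some q ↔ π ∈ B'.dom ∧ q = g' π := by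
    have hBnil : [] ∈ B'.dom := by
      obtain ⟨π, hπ⟩ := hBne; exact hBpref [] π (by simpa using hπ)
    intro π
    induction π using List.reverseRecOn with
    | nil =>
      intro q
      simp only [deltaStar, hg'root, Option.some_inj]
      constructor
      · rintro rfl; exact ⟨hBnil, rfl⟩
      · rintro ⟨-, rfl⟩; rfl
    | append_singleton π' f ih =>
      intro q
      rw [deltaStar_append']
      constructor
      · intro hq
        obtain ⟨q₀, hq₀, hstep⟩ := Option.bind_eq_some_iff.mp hq
        obtain ⟨hπ', rfl⟩ := (ih q₀).mp hq₀
        simp only [deltaStar] at hstep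
        by_cases hmem : π' ++ [f] ∈ B'.dom
        · rw [(hg'delta π' hπ' f).1 hmem] at hstep
          simp only [Option.bind_some, Option.some_inj] at hstep
          exact ⟨hmem, hstep.symm⟩
        · rw [(hg'delta π' hπ' f).2 hmem] at hstep
          simp at hstep
      · rintro ⟨hmem, rfl⟩
        have hπ' : π' ∈ B'.dom := hBpref π' [f] hmem
        rw [(ih (g' π')).mpr ⟨hπ', rfl⟩]
        simp [deltaStar, (hg'delta π' hπ' f).1 hmem]

  constructor
  · rintro ⟨h, hQ, hroot, hθ, hδ⟩
    have hstar : ∀ π : List F, ∀ q q₀ : N, deltaStar A.delta q₀ π = some q →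
        deltaStar B.delta (h q₀) π = some (h q) := by
      intro π
      induction π with
      | nil =>
        intro q q₀ hq
        simp only [deltaStar, Option.some_inj] at hq ⊢
        rw [hq]
      | cons f rest ih =>
        intro q q₀ hq
        simp only [deltaStar] at hq ⊢
        obtain ⟨q₁, hd, hrest⟩ := Option.bind_eq_some_iff.mp hq
        rw [hδ _ _ _ hd]
        simpa using ih q q₁ hrest
    have key : ∀ π ∈ A'.dom, π ∈ B'.dom ∧ g' π = h (g π) := by
      intro π hπ
      have hval := (valA π (g π)).mpr ⟨hπ, rfl⟩
      have h2 := hstar π (g π) A.root hval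
      rw [hroot] at h2
      obtain ⟨hd, he⟩ := (valB π _).mp h2
      exact ⟨hd, he.symm⟩
    refine ⟨fun π hπ => (key π hπ).1, ?_, ?_⟩
    · intro π₁ π₂ hr
      obtain ⟨h₁, h₂⟩ := hArel π₁ π₂ hr
      have hg : g π₁ = g π₂ := (hginj π₁ h₁ π₂ h₂).mpr hr
      have : g' π₁ = g' π₂ := by
        rw [(key π₁ h₁).2, (key π₂ h₂).2, hg]
      exact (hg'inj π₁ (key π₁ h₁).1 π₂ (key π₂ h₂).1).mp this
    · intro π hπ t₁ t₂ h1 h2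
      have e1 : t₁ = θ (g π) := by
        have := hgtheta π hπ; rw [h1] at this; exact Option.some_inj.mp this
      have e2 : t₂ = θ (g' π) := by
        have := hg'theta π (key π hπ).1; rw [h2] at this
        exact Option.some_inj.mp this
      have hmem : g π ∈ A.Q := by
        have : g π ∈ (A.Q : Set N) := by rw [hgQ]; exact ⟨π, hπ, rfl⟩
        exact_mod_cast this
      rw [e1, e2, (key π hπ).2]
      exact hθ _ hmem
  · rintro ⟨hsub, hrelle, hthle⟩
    classical
    let h : N → N := fun q =>
      if hq : ∃ π, π ∈ A'.dom ∧ g π = q then g' hq.choose else q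
    have hspec : ∀ π ∈ A'.dom, h (g π) = g' π := by
      intro π hπ
      have hex : ∃ π', π' ∈ A'.dom ∧ g π' = g π := ⟨π, hπ, rfl⟩
      obtain ⟨hπ₀, heq⟩ := hex.choose_spec
      have h1 : h (g π) = g' hex.choose := dif_pos hex
      rw [h1]
      exact (hg'inj _ (hsub hπ₀) _ (hsub hπ)).mpr
        (hrelle _ _ ((hginj _ hπ₀ _ hπ).mp heq))
    have memA : ∀ q, q ∈ A.Q → ∃ π ∈ A'.dom, g π = q := by
      intro q hq
      have : q ∈ (A.Q : Set N) := by exact_mod_cast hq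
      rw [hgQ] at this
      obtain ⟨π, hπ, he⟩ := this
      exact ⟨π, hπ, he⟩
    refine ⟨h, ?_, ?_, ?_, ?_⟩
    · intro q hq
      obtain ⟨π, hπ, rfl⟩ := memA q hq
      rw [hspec π hπ]
      have : g' π ∈ (B.Q : Set N) := by rw [hg'Q]; exact ⟨π, hsub hπ, rfl⟩
      exact_mod_cast this
    · rw [hgroot, hspec [] hAnil, hg'root]
    · intro q hq
      obtain ⟨π, hπ, rfl⟩ := memA q hq
      rw [hspec π hπ]
      exact hthle π hπ _ _ (hgtheta π hπ) (hg'theta π (hsub hπ))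
    · intro q f q' hd
      obtain ⟨hqQ, -⟩ := A.delta_dom q f q' hd
      obtain ⟨π, hπ, rfl⟩ := memA q hqQ
      by_cases hmem : π ++ [f] ∈ A'.dom
      · have h1 := (hgdelta π hπ f).1 hmem
        rw [h1, Option.some_inj] at hd
        rw [hspec π hπ, ← hd, hspec _ hmem]
        exact (hg'delta π (hsub hπ) f).1 (hsub hmem)
      · rw [(hgdelta π hπ f).2 hmem] at hd
        exact absurd hd (by simp)
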